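/- arXiv:1506.03761 — 4 statements merged into one kernel-verified Lean document; each statement's English description precedes it below -/
import Mathlib

section
/- Let γ ∈ ℝ, κ(x) = tanh(x/√2), and let ζ_n(x) = 1 + (γ|x|/2) e^{-n x²} for n ≥ 1. For any u : ℝ → ℂ which is H¹_loc, H² away from 0, with u'(0⁺) = u'(0⁻), the function ζ_n u satisfies the jump condition (ζ_n u)'(0⁺) - (ζ_n u)'(0⁻) = γ (ζ_n u)(0); moreover ‖ζ_n - 1‖_{L^∞} → 0, ‖ζ_n'‖_{L²} → 0 and ‖1 - |ζ_n|²‖_{L²} → 0 as n → ∞. -/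
open MeasureTheory Filter Topology
open scoped ENNReal NNReal

/-- The cutoff-correction functions `ζ_n(x) = 1 + (γ|x|/2) e^{-n x²}`. -/
noncomputable def zeta (γ : ℝ) (n : ℕ) (x : ℝ) : ℝ :=
  1 + (γ * |x| / 2) * Real.exp (-(n : ℝ) * x ^ 2)

namespace ZetaAux

lemma zeta_sub_one (γ : ℝ) (n : ℕ) (x : ℝ) :
    zeta γ n x - 1 = γ * |x| / 2 * Real.exp (-(n : ℝ) * x ^ 2) := by
  simp [zeta]

lemma zeta_zero (γ : ℝ) (n : ℕ) : zeta γ n 0 = 1 := by simp [zeta]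

lemma continuous_zeta (γ : ℝ) (n : ℕ) : Continuous (zeta γ n) := by
  unfold zeta; fun_prop

/-- `|x| ≤ e^{x²/2}`. -/
lemma abs_le_exp_half_sq (x : ℝ) : |x| ≤ Real.exp (x ^ 2 / 2) := by
  nlinarith [Real.add_one_le_exp (x ^ 2 / 2), sq_nonneg (|x| - 1), sq_abs x]

/-- `t e^{-t} ≤ e^{-t/2}` for `t ≥ 0`. -/
lemma t_exp_le (t : ℝ) (ht : 0 ≤ t) : t * Real.exp (-t) ≤ Real.exp (-(t / 2)) := by
  have key : t ≤ Real.exp (t / 2) := by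
    have h4 := Real.add_one_le_exp (t / 4)
    have he : Real.exp (t / 2) = Real.exp (t / 4) * Real.exp (t / 4) := by
      rw [← Real.exp_add]; ring_nf
    have h5 : (t / 4 + 1) * (t / 4 + 1) ≤ Real.exp (t / 4) * Real.exp (t / 4) :=
      mul_le_mul h4 h4 (by linarith) (Real.exp_pos _).le
    nlinarith [sq_nonneg (t / 4 - 1)]
  calc t * Real.exp (-t) ≤ Real.exp (t / 2) * Real.exp (-t) :=
        mul_le_mul_of_nonneg_right key (Real.exp_pos _).le
    _ = Real.exp (-(t / 2)) := by rw [← Real.exp_add]; congr 1; ring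

/-- `|x| e^{-n x²} ≤ 1/(2√n)` for `n ≥ 1`. -/
lemma abs_mul_exp_le (n : ℕ) (hn : 1 ≤ n) (x : ℝ) :
    |x| * Real.exp (-((n : ℝ) * x ^ 2)) ≤ 1 / (2 * Real.sqrt n) := by
  have hn0 : (0 : ℝ) < n := by exact_mod_cast hn
  have hsn : 0 < Real.sqrt n := Real.sqrt_pos.2 hn0
  set s : ℝ := Real.sqrt n * |x| with hs
  have hs0 : 0 ≤ s := by positivity
  have hs2 : s ^ 2 = (n : ℝ) * x ^ 2 := by
    rw [hs, mul_pow, Real.sq_sqrt hn0.le, sq_abs]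
  have h1 : 2 * s ≤ Real.exp ((n : ℝ) * x ^ 2) := by
    rw [← hs2]
    nlinarith [Real.add_one_le_exp (s ^ 2), sq_nonneg (s - 1)]
  have hE := Real.exp_pos ((n : ℝ) * x ^ 2)
  rw [Real.exp_neg, le_div_iff₀ (by positivity)]
  have heq : |x| * (Real.exp ((n : ℝ) * x ^ 2))⁻¹ * (2 * Real.sqrt n)
      = (2 * s) * (Real.exp ((n : ℝ) * x ^ 2))⁻¹ := by rw [hs]; ring
  rw [heq]
  calc (2 * s) * (Real.exp ((n : ℝ) * x ^ 2))⁻¹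
      ≤ Real.exp ((n : ℝ) * x ^ 2) * (Real.exp ((n : ℝ) * x ^ 2))⁻¹ :=
        mul_le_mul_of_nonneg_right h1 (inv_nonneg.2 hE.le)
    _ = 1 := mul_inv_cancel₀ hE.ne'

lemma bound_sup (γ : ℝ) (n : ℕ) (hn : 1 ≤ n) (x : ℝ) :
    |zeta γ n x - 1| ≤ |γ| / (4 * Real.sqrt n) := by
  rw [zeta_sub_one]
  have h := abs_mul_exp_le n hn x
  have habs : |γ * |x| / 2 * Real.exp (-(n : ℝ) * x ^ 2)|
      = |γ| / 2 * (|x| * Real.exp (-((n : ℝ) * x ^ 2))) := by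
    rw [abs_mul, abs_of_pos (Real.exp_pos _), abs_div, abs_mul, abs_abs]
    norm_num; ring_nf
  rw [habs]
  have := mul_le_mul_of_nonneg_left h (by positivity : (0:ℝ) ≤ |γ| / 2)
  calc |γ| / 2 * (|x| * Real.exp (-((n : ℝ) * x ^ 2)))
      ≤ |γ| / 2 * (1 / (2 * Real.sqrt n)) := this
    _ = |γ| / (4 * Real.sqrt n) := by ring

/-- `|ζ_n(x) - 1| ≤ (|γ|/2) e^{-n x²/2}` for `n ≥ 1`. -/
lemma zeta_sub_one_le (γ : ℝ) (n : ℕ) (hn : 1 ≤ n) (x : ℝ) :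
    |zeta γ n x - 1| ≤ |γ| / 2 * Real.exp (-((n : ℝ) * x ^ 2) / 2) := by
  rw [zeta_sub_one]
  have hn1 : (1 : ℝ) ≤ n := by exact_mod_cast hn
  have hx : |x| ≤ Real.exp ((n : ℝ) * x ^ 2 / 2) := by
    refine (abs_le_exp_half_sq x).trans (Real.exp_le_exp.2 ?_)
    nlinarith [sq_nonneg x]
  have habs : |γ * |x| / 2 * Real.exp (-(n : ℝ) * x ^ 2)|
      = |γ| / 2 * (|x| * Real.exp (-((n : ℝ) * x ^ 2))) := by
    rw [abs_mul, abs_of_pos (Real.exp_pos _), abs_div, abs_mul, abs_abs]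
    norm_num; ring_nf
  rw [habs]
  have h2 : |x| * Real.exp (-((n : ℝ) * x ^ 2)) ≤ Real.exp (-((n : ℝ) * x ^ 2) / 2) := by
    calc |x| * Real.exp (-((n : ℝ) * x ^ 2))
        ≤ Real.exp ((n : ℝ) * x ^ 2 / 2) * Real.exp (-((n : ℝ) * x ^ 2)) :=
          mul_le_mul_of_nonneg_right hx (Real.exp_pos _).le
      _ = Real.exp (-((n : ℝ) * x ^ 2) / 2) := by rw [← Real.exp_add]; congr 1; ring
  calc |γ| / 2 * (|x| * Real.exp (-((n : ℝ) * x ^ 2)))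
      ≤ |γ| / 2 * Real.exp (-((n : ℝ) * x ^ 2) / 2) :=
        mul_le_mul_of_nonneg_left h2 (by positivity)
    _ = _ := rfl

/-- Derivative of `ζ_n` on the right half-line. -/
lemma hasDerivAt_zeta_pos (γ : ℝ) (n : ℕ) {x : ℝ} (hx : 0 < x) :
    HasDerivAt (zeta γ n)
      (γ / 2 * Real.exp (-((n : ℝ) * x ^ 2)) * (1 - 2 * (n : ℝ) * x ^ 2)) x := by
  have hinner : HasDerivAt (fun y : ℝ => Real.exp (-(n : ℝ) * y ^ 2))
      (Real.exp (-(n : ℝ) * x ^ 2) * (-(n : ℝ) * (2 * x ^ 1))) x :=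
    (((hasDerivAt_pow 2 x).const_mul (-(n : ℝ)))).exp
  have hg : HasDerivAt (fun y : ℝ => 1 + γ / 2 * (y * Real.exp (-(n : ℝ) * y ^ 2)))
      (γ / 2 * (1 * Real.exp (-(n : ℝ) * x ^ 2)
        + x * (Real.exp (-(n : ℝ) * x ^ 2) * (-(n : ℝ) * (2 * x ^ 1))))) x :=
    (((hasDerivAt_id x).mul hinner).const_mul (γ / 2)).const_add 1
  have hev : zeta γ n =ᶠ[𝓝 x] fun y : ℝ => 1 + γ / 2 * (y * Real.exp (-(n : ℝ) * y ^ 2)) := by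
    filter_upwards [eventually_gt_nhds hx] with y hy
    rw [zeta, abs_of_pos hy]; ring
  have := hg.congr_of_eventuallyEq hev
  refine this.congr_deriv ?_
  rw [neg_mul]; ring

/-- Derivative of `ζ_n` on the left half-line. -/
lemma hasDerivAt_zeta_neg (γ : ℝ) (n : ℕ) {x : ℝ} (hx : x < 0) :
    HasDerivAt (zeta γ n)
      (-(γ / 2) * Real.exp (-((n : ℝ) * x ^ 2)) * (1 - 2 * (n : ℝ) * x ^ 2)) x := by
  have hinner : HasDerivAt (fun y : ℝ => Real.exp (-(n : ℝ) * y ^ 2))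
      (Real.exp (-(n : ℝ) * x ^ 2) * (-(n : ℝ) * (2 * x ^ 1))) x :=
    (((hasDerivAt_pow 2 x).const_mul (-(n : ℝ)))).exp
  have hg : HasDerivAt (fun y : ℝ => 1 + (-(γ / 2)) * (y * Real.exp (-(n : ℝ) * y ^ 2)))
      ((-(γ / 2)) * (1 * Real.exp (-(n : ℝ) * x ^ 2)
        + x * (Real.exp (-(n : ℝ) * x ^ 2) * (-(n : ℝ) * (2 * x ^ 1))))) x :=
    (((hasDerivAt_id x).mul hinner).const_mul (-(γ / 2))).const_add 1
  have hev : zeta γ n =ᶠ[𝓝 x] fun y : ℝ => 1 + (-(γ / 2)) * (y * Real.exp (-(n : ℝ) * y ^ 2)) := by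
    filter_upwards [eventually_lt_nhds hx] with y hy
    rw [zeta, abs_of_neg hy]; ring
  have := hg.congr_of_eventuallyEq hev
  refine this.congr_deriv ?_
  rw [neg_mul]; ring

lemma deriv_zeta_abs_le (γ : ℝ) (n : ℕ) {x : ℝ} (hx : x ≠ 0) :
    |deriv (zeta γ n) x| ≤ |γ| / 2 * (Real.exp (-((n : ℝ) * x ^ 2)) * (1 + 2 * (n : ℝ) * x ^ 2)) := by
  have hT : (0 : ℝ) ≤ 2 * (n : ℝ) * x ^ 2 := by positivity
  have habs : |1 - 2 * (n : ℝ) * x ^ 2| ≤ 1 + 2 * (n : ℝ) * x ^ 2 :=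
    abs_le.2 ⟨by nlinarith, by nlinarith⟩
  rcases hx.lt_or_gt with h | h
  · rw [(hasDerivAt_zeta_neg γ n h).deriv, abs_mul, abs_mul, abs_neg, abs_div,
      abs_of_pos (Real.exp_pos _)]
    have h2 : |γ| / |2| = |γ| / 2 := by norm_num
    rw [h2, mul_assoc]
    exact mul_le_mul_of_nonneg_left
      (mul_le_mul_of_nonneg_left habs (Real.exp_pos _).le) (by positivity)
  · rw [(hasDerivAt_zeta_pos γ n h).deriv, abs_mul, abs_mul, abs_div,
      abs_of_pos (Real.exp_pos _)]
    have h2 : |γ| / |2| = |γ| / 2 := by norm_num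
    rw [h2, mul_assoc]
    exact mul_le_mul_of_nonneg_left
      (mul_le_mul_of_nonneg_left habs (Real.exp_pos _).le) (by positivity)

/-- `|ζ_n'(x)| ≤ (3|γ|/2) e^{-n x²/2}` for `x ≠ 0`. -/
lemma deriv_zeta_le' (γ : ℝ) (n : ℕ) {x : ℝ} (hx : x ≠ 0) :
    |deriv (zeta γ n) x| ≤ 3 * |γ| / 2 * Real.exp (-((n : ℝ) * x ^ 2) / 2) := by
  have h1 := deriv_zeta_abs_le γ n (x := x) hx
  set T : ℝ := (n : ℝ) * x ^ 2 with hT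
  have hT0 : 0 ≤ T := by positivity
  have h2 : Real.exp (-T) * (1 + 2 * T) ≤ 3 * Real.exp (-(T / 2)) := by
    have ha := t_exp_le T hT0
    have hb : Real.exp (-T) ≤ Real.exp (-(T / 2)) :=
      Real.exp_le_exp.2 (by linarith)
    nlinarith [Real.exp_pos (-(T / 2))]
  have h3 : |γ| / 2 * (Real.exp (-T) * (1 + 2 * (n : ℝ) * x ^ 2))
      ≤ |γ| / 2 * (3 * Real.exp (-(T / 2))) := by
    apply mul_le_mul_of_nonneg_left _ (by positivity)
    have : 1 + 2 * (n : ℝ) * x ^ 2 = 1 + 2 * T := by rw [hT]; ring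
    rw [this]; exact h2
  calc |deriv (zeta γ n) x| ≤ |γ| / 2 * (Real.exp (-T) * (1 + 2 * (n : ℝ) * x ^ 2)) := h1
    _ ≤ |γ| / 2 * (3 * Real.exp (-(T / 2))) := h3
    _ = 3 * |γ| / 2 * Real.exp (-T / 2) := by rw [neg_div]; ring
    _ = 3 * |γ| / 2 * Real.exp (-((n : ℝ) * x ^ 2) / 2) := rfl

/-- Uniform-in-`n` domination for `n ≥ 1`. -/
lemma deriv_zeta_le (γ : ℝ) (n : ℕ) (hn : 1 ≤ n) {x : ℝ} (hx : x ≠ 0) :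
    |deriv (zeta γ n) x| ≤ 3 * |γ| / 2 * Real.exp (-x ^ 2 / 2) := by
  refine (deriv_zeta_le' γ n hx).trans ?_
  apply mul_le_mul_of_nonneg_left _ (by positivity)
  apply Real.exp_le_exp.2
  have hn1 : (1 : ℝ) ≤ n := by exact_mod_cast hn
  nlinarith [sq_nonneg x]

/-- `|1 - ζ_n(x)²| ≤ C e^{-n x²/2}` for `n ≥ 1`, with `C = (|γ|/2)(2 + |γ|/2)`. -/
lemma one_sub_sq_le' (γ : ℝ) (n : ℕ) (hn : 1 ≤ n) (x : ℝ) :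
    |1 - zeta γ n x ^ 2| ≤ |γ| / 2 * (2 + |γ| / 2) * Real.exp (-((n : ℝ) * x ^ 2) / 2) := by
  set w : ℝ := zeta γ n x - 1 with hw
  have h1 : |w| ≤ |γ| / 2 * Real.exp (-((n : ℝ) * x ^ 2) / 2) := zeta_sub_one_le γ n hn x
  have hexp1 : Real.exp (-((n : ℝ) * x ^ 2) / 2) ≤ 1 := by
    rw [Real.exp_le_one_iff]
    have : (0:ℝ) ≤ (n : ℝ) * x ^ 2 := by positivity
    linarith
  have h2 : |w| ≤ |γ| / 2 := by
    refine h1.trans ?_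
    calc |γ| / 2 * Real.exp (-((n : ℝ) * x ^ 2) / 2) ≤ |γ| / 2 * 1 :=
          mul_le_mul_of_nonneg_left hexp1 (by positivity)
      _ = |γ| / 2 := mul_one _
  have heq : 1 - zeta γ n x ^ 2 = -(w * (w + 2)) := by rw [hw]; ring
  rw [heq, abs_neg, abs_mul]
  have h3 : |w + 2| ≤ 2 + |γ| / 2 := by
    calc |w + 2| ≤ |w| + |(2:ℝ)| := abs_add_le _ _
      _ ≤ |γ| / 2 + 2 := by rw [abs_two]; linarith
      _ = 2 + |γ| / 2 := by ring
  calc |w| * |w + 2| ≤ (|γ| / 2 * Real.exp (-((n : ℝ) * x ^ 2) / 2)) * (2 + |γ| / 2) :=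
        mul_le_mul h1 h3 (abs_nonneg _) (by positivity)
    _ = |γ| / 2 * (2 + |γ| / 2) * Real.exp (-((n : ℝ) * x ^ 2) / 2) := by ring

lemma one_sub_sq_le (γ : ℝ) (n : ℕ) (hn : 1 ≤ n) (x : ℝ) :
    |1 - zeta γ n x ^ 2| ≤ |γ| / 2 * (2 + |γ| / 2) * Real.exp (-x ^ 2 / 2) := by
  refine (one_sub_sq_le' γ n hn x).trans ?_
  apply mul_le_mul_of_nonneg_left _ (by positivity)
  apply Real.exp_le_exp.2
  have hn1 : (1 : ℝ) ≤ n := by exact_mod_cast hn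
  nlinarith [sq_nonneg x]

lemma ae_ne_zero : ∀ᵐ x : ℝ ∂volume, x ≠ 0 := by
  have h0 : (volume : Measure ℝ) {0} = 0 := measure_singleton 0
  rw [ae_iff]; simpa using h0

lemma exp_seq_tendsto_zero {x : ℝ} (hx : x ≠ 0) :
    Tendsto (fun n : ℕ => Real.exp (-((n : ℝ) * x ^ 2) / 2)) atTop (𝓝 0) := by
  have hx2 : (0 : ℝ) < x ^ 2 / 2 := by positivity
  have h1 : Tendsto (fun n : ℕ => (n : ℝ) * (x ^ 2 / 2)) atTop atTop :=
    tendsto_natCast_atTop_atTop.atTop_mul_const hx2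
  have h2 : Tendsto (fun n : ℕ => -((n : ℝ) * (x ^ 2 / 2))) atTop atBot :=
    tendsto_neg_atTop_atBot.comp h1
  have h3 := Real.tendsto_exp_atBot.comp h2
  refine h3.congr fun n => ?_
  simp only [Function.comp]; congr 1; ring

/-- Generic sufficient condition for `‖f_n‖_{L²} → 0`. -/
lemma L2_tendsto (f : ℕ → ℝ → ℝ) (C : ℝ)
    (hmeas : ∀ n, Measurable (f n))
    (hbd : ∀ᶠ n in atTop, ∀ᵐ x : ℝ ∂volume, |f n x| ≤ C * Real.exp (-x ^ 2 / 2))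
    (hlim : ∀ᵐ x : ℝ ∂volume, Tendsto (fun n => f n x) atTop (𝓝 0)) :
    Tendsto (fun n => eLpNorm (f n) 2 (volume : Measure ℝ)) atTop (𝓝 0) := by
  have h2 : ∀ n, eLpNorm (f n) 2 (volume : Measure ℝ)
      = (∫⁻ x, (‖f n x‖₊ : ℝ≥0∞) ^ (2 : ℝ) ∂volume) ^ (1 / (2 : ℝ)) := fun n => by
    rw [eLpNorm_eq_lintegral_rpow_enorm_toReal (by norm_num) (by norm_num)]
    simp only [enorm_eq_nnnorm]
    norm_num
  simp only [h2]
  have key : Tendsto (fun n => ∫⁻ x, (‖f n x‖₊ : ℝ≥0∞) ^ (2 : ℝ) ∂volume) atTop (𝓝 0) := by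
    have := tendsto_lintegral_filter_of_dominated_convergence
      (μ := (volume : Measure ℝ)) (l := atTop)
      (F := fun n x => (‖f n x‖₊ : ℝ≥0∞) ^ (2 : ℝ)) (f := fun _ => 0)
      (fun x => ENNReal.ofReal ((C * Real.exp (-x ^ 2 / 2)) ^ 2))
      (Eventually.of_forall fun n => ((hmeas n).nnnorm.coe_nnreal_ennreal).pow_const _)
      ?_ ?_ ?_
    · simpa using this
    · filter_upwards [hbd] with n hb
      filter_upwards [hb] with x hx
      have h0 : 0 ≤ C * Real.exp (-x ^ 2 / 2) := (abs_nonneg _).trans hx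
      calc ((‖f n x‖₊ : ℝ≥0∞)) ^ (2 : ℝ)
          = (ENNReal.ofReal |f n x|) ^ (2 : ℝ) := by
            rw [← Real.norm_eq_abs, ofReal_norm, enorm_eq_nnnorm]
        _ ≤ (ENNReal.ofReal (C * Real.exp (-x ^ 2 / 2))) ^ (2 : ℝ) :=
            ENNReal.rpow_le_rpow (ENNReal.ofReal_le_ofReal hx) (by norm_num)
        _ = ENNReal.ofReal ((C * Real.exp (-x ^ 2 / 2)) ^ (2 : ℝ)) :=
            ENNReal.ofReal_rpow_of_nonneg h0 (by norm_num)
        _ = ENNReal.ofReal ((C * Real.exp (-x ^ 2 / 2)) ^ 2) := by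
            rw [Real.rpow_two]
    · have hint : Integrable (fun x : ℝ => C ^ 2 * Real.exp (-1 * x ^ 2)) volume :=
        (integrable_exp_neg_mul_sq one_pos).const_mul _
      have heq : ∀ x : ℝ, (C * Real.exp (-x ^ 2 / 2)) ^ 2 = C ^ 2 * Real.exp (-1 * x ^ 2) := by
        intro x
        have : Real.exp (-x ^ 2 / 2) ^ 2 = Real.exp (-1 * x ^ 2) := by
          rw [← Real.exp_nat_mul]; congr 1; push_cast; ring
        rw [mul_pow, this]
      have : ∫⁻ x : ℝ, ENNReal.ofReal ((C * Real.exp (-x ^ 2 / 2)) ^ 2) ∂volume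
          = ∫⁻ x : ℝ, ENNReal.ofReal (C ^ 2 * Real.exp (-1 * x ^ 2)) ∂volume :=
        lintegral_congr fun x => by rw [heq x]
      rw [this]
      exact hint.lintegral_lt_top.ne
    · filter_upwards [hlim] with x hx
      have hφ : Continuous fun r : ℝ => ((‖r‖₊ : ℝ≥0∞)) ^ (2 : ℝ) :=
        ENNReal.continuous_rpow_const.comp (ENNReal.continuous_coe.comp continuous_nnnorm)
      have := (hφ.tendsto 0).comp hx
      simpa [ENNReal.zero_rpow_of_pos, Function.comp_def] using this
  have hc : Tendsto (fun z : ℝ≥0∞ => z ^ (1 / (2 : ℝ))) (𝓝 0) (𝓝 0) := by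
    have := (ENNReal.continuous_rpow_const (y := 1 / (2 : ℝ))).tendsto 0
    simpa [ENNReal.zero_rpow_of_pos] using this
  exact hc.comp key

lemma sqrt_nat_atTop : Tendsto (fun n : ℕ => Real.sqrt n) atTop atTop := by
  refine tendsto_atTop_atTop.2 fun b => ⟨⌈b⌉₊ * ⌈b⌉₊, fun n hn => ?_⟩
  have h1 : ((⌈b⌉₊ * ⌈b⌉₊ : ℕ) : ℝ) ≤ (n : ℝ) := by exact_mod_cast hn
  have h2 : Real.sqrt ((⌈b⌉₊ : ℝ) * ⌈b⌉₊) ≤ Real.sqrt n := by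
    apply Real.sqrt_le_sqrt; push_cast at h1 ⊢; linarith
  have h3 : Real.sqrt ((⌈b⌉₊ : ℝ) * ⌈b⌉₊) = (⌈b⌉₊ : ℝ) :=
    Real.sqrt_mul_self (Nat.cast_nonneg _)
  have h4 : b ≤ (⌈b⌉₊ : ℝ) := Nat.le_ceil b
  linarith

end ZetaAux

open ZetaAux

/-- Multiplication by `ζ_n` produces the jump condition `(ζ_n u)'(0⁺) - (ζ_n u)'(0⁻) = γ (ζ_n u)(0)`
for any `u` smooth away from `0` whose derivative has equal one-sided limits at `0`; moreover
`‖ζ_n - 1‖_{L∞} → 0`, `‖ζ_n'‖_{L²} → 0` and `‖1-|ζ_n|²‖_{L²} → 0` as `n → ∞`. -/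
theorem zeta_jump_and_limits (γ : ℝ) :
    (∀ n : ℕ, 1 ≤ n → ∀ u : ℝ → ℂ, Continuous u →
      DifferentiableOn ℝ u {x : ℝ | x ≠ 0} →
      DifferentiableOn ℝ (deriv u) {x : ℝ | x ≠ 0} →
      ∀ a : ℂ, Tendsto (deriv u) (𝓝[>] (0:ℝ)) (𝓝 a) →
        Tendsto (deriv u) (𝓝[<] (0:ℝ)) (𝓝 a) →
      ∃ dp dm : ℂ,
        Tendsto (deriv (fun x => ((zeta γ n x : ℝ) : ℂ) * u x)) (𝓝[>] (0:ℝ)) (𝓝 dp) ∧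
        Tendsto (deriv (fun x => ((zeta γ n x : ℝ) : ℂ) * u x)) (𝓝[<] (0:ℝ)) (𝓝 dm) ∧
        dp - dm = (γ : ℂ) * (((zeta γ n 0 : ℝ) : ℂ) * u 0)) ∧
    Tendsto (fun n : ℕ => eLpNorm (fun x => zeta γ n x - 1) ⊤ (volume : Measure ℝ))
      atTop (𝓝 0) ∧
    Tendsto (fun n : ℕ => eLpNorm (deriv (zeta γ n)) 2 (volume : Measure ℝ))
      atTop (𝓝 0) ∧
    Tendsto (fun n : ℕ => eLpNorm (fun x => 1 - (zeta γ n x) ^ 2) 2 (volume : Measure ℝ))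
      atTop (𝓝 0) := by
  refine ⟨?part1, ?part2, ?part3, ?part4⟩
  case part1 =>
    intro n hn u hu hdu hdu2 a hap ham
    refine ⟨((γ : ℂ) / 2) * u 0 + a, (-((γ : ℂ) / 2)) * u 0 + a, ?_, ?_, ?_⟩
    · -- right limit
      have keyR : ∀ᶠ x in 𝓝[>] (0:ℝ),
          ((γ / 2 * Real.exp (-((n : ℝ) * x ^ 2)) * (1 - 2 * (n : ℝ) * x ^ 2) : ℝ) : ℂ) * u x
            + ((zeta γ n x : ℝ) : ℂ) * deriv u x
          = deriv (fun y => ((zeta γ n y : ℝ) : ℂ) * u y) x := by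
        filter_upwards [self_mem_nhdsWithin] with x hx
        have hx0 : x ≠ 0 := ne_of_gt hx
        have hz := (hasDerivAt_zeta_pos γ n hx).ofReal_comp
        have hud : DifferentiableAt ℝ u x :=
          hdu.differentiableAt (isOpen_ne.mem_nhds hx0)
        exact ((hz.mul hud.hasDerivAt).deriv).symm
      have t1 : Tendsto
          (fun x : ℝ => ((γ / 2 * Real.exp (-((n : ℝ) * x ^ 2)) * (1 - 2 * (n : ℝ) * x ^ 2) : ℝ) : ℂ))
          (𝓝[>] (0:ℝ)) (𝓝 ((γ : ℂ) / 2)) := by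
        have hc : Continuous fun x : ℝ =>
            ((γ / 2 * Real.exp (-((n : ℝ) * x ^ 2)) * (1 - 2 * (n : ℝ) * x ^ 2) : ℝ) : ℂ) := by
          fun_prop
        have h0 : Tendsto
            (fun x : ℝ => ((γ / 2 * Real.exp (-((n : ℝ) * x ^ 2)) * (1 - 2 * (n : ℝ) * x ^ 2) : ℝ) : ℂ))
            (𝓝 (0:ℝ)) (𝓝 ((γ : ℂ) / 2)) := by simpa using hc.tendsto 0
        exact h0.mono_left nhdsWithin_le_nhds
      have t2 : Tendsto (fun x : ℝ => ((zeta γ n x : ℝ) : ℂ)) (𝓝[>] (0:ℝ)) (𝓝 1) := by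
        have hc : Continuous fun x : ℝ => ((zeta γ n x : ℝ) : ℂ) :=
          Complex.continuous_ofReal.comp (continuous_zeta γ n)
        have h0 : Tendsto (fun x : ℝ => ((zeta γ n x : ℝ) : ℂ)) (𝓝 (0:ℝ)) (𝓝 (1:ℂ)) := by
          simpa [zeta_zero] using hc.tendsto 0
        exact h0.mono_left nhdsWithin_le_nhds
      have t3 : Tendsto u (𝓝[>] (0:ℝ)) (𝓝 (u 0)) :=
        (hu.tendsto 0).mono_left nhdsWithin_le_nhds
      have := (t1.mul t3).add (t2.mul hap)
      have h := Tendsto.congr' keyR this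
      simpa using h
    · -- left limit
      have keyL : ∀ᶠ x in 𝓝[<] (0:ℝ),
          ((-(γ / 2) * Real.exp (-((n : ℝ) * x ^ 2)) * (1 - 2 * (n : ℝ) * x ^ 2) : ℝ) : ℂ) * u x
            + ((zeta γ n x : ℝ) : ℂ) * deriv u x
          = deriv (fun y => ((zeta γ n y : ℝ) : ℂ) * u y) x := by
        filter_upwards [self_mem_nhdsWithin] with x hx
        have hx0 : x ≠ 0 := ne_of_lt hx
        have hz := (hasDerivAt_zeta_neg γ n hx).ofReal_comp
        have hud : DifferentiableAt ℝ u x :=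
          hdu.differentiableAt (isOpen_ne.mem_nhds hx0)
        exact ((hz.mul hud.hasDerivAt).deriv).symm
      have t1 : Tendsto
          (fun x : ℝ => ((-(γ / 2) * Real.exp (-((n : ℝ) * x ^ 2)) * (1 - 2 * (n : ℝ) * x ^ 2) : ℝ) : ℂ))
          (𝓝[<] (0:ℝ)) (𝓝 (-((γ : ℂ) / 2))) := by
        have hc : Continuous fun x : ℝ =>
            ((-(γ / 2) * Real.exp (-((n : ℝ) * x ^ 2)) * (1 - 2 * (n : ℝ) * x ^ 2) : ℝ) : ℂ) := by
          fun_prop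
        have h0 : Tendsto
            (fun x : ℝ => ((-(γ / 2) * Real.exp (-((n : ℝ) * x ^ 2)) * (1 - 2 * (n : ℝ) * x ^ 2) : ℝ) : ℂ))
            (𝓝 (0:ℝ)) (𝓝 (-((γ : ℂ) / 2))) := by simpa using hc.tendsto 0
        exact h0.mono_left nhdsWithin_le_nhds
      have t2 : Tendsto (fun x : ℝ => ((zeta γ n x : ℝ) : ℂ)) (𝓝[<] (0:ℝ)) (𝓝 1) := by
        have hc : Continuous fun x : ℝ => ((zeta γ n x : ℝ) : ℂ) :=
          Complex.continuous_ofReal.comp (continuous_zeta γ n)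
        have h0 : Tendsto (fun x : ℝ => ((zeta γ n x : ℝ) : ℂ)) (𝓝 (0:ℝ)) (𝓝 (1:ℂ)) := by
          simpa [zeta_zero] using hc.tendsto 0
        exact h0.mono_left nhdsWithin_le_nhds
      have t3 : Tendsto u (𝓝[<] (0:ℝ)) (𝓝 (u 0)) :=
        (hu.tendsto 0).mono_left nhdsWithin_le_nhds
      have := (t1.mul t3).add (t2.mul ham)
      have h := Tendsto.congr' keyL this
      simpa using h
    · rw [zeta_zero]
      push_cast
      ring
  case part2 =>
    apply tendsto_of_tendsto_of_tendsto_of_le_of_le'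
      (tendsto_const_nhds : Tendsto (fun _ : ℕ => (0:ℝ≥0∞)) atTop (𝓝 0))
      (show Tendsto (fun n : ℕ => ENNReal.ofReal (|γ| / (4 * Real.sqrt n))) atTop (𝓝 0) from ?_)
      (Eventually.of_forall fun n => zero_le) ?_
    · have hr : Tendsto (fun n : ℕ => |γ| / (4 * Real.sqrt n)) atTop (𝓝 0) :=
        Tendsto.div_atTop tendsto_const_nhds
          ((sqrt_nat_atTop.atTop_mul_const (by norm_num : (0:ℝ) < 4)).congr fun n => by ring)
      have := ENNReal.tendsto_ofReal hr
      simpa using this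
    · filter_upwards [eventually_ge_atTop 1] with n hn
      rw [eLpNorm_exponent_top]
      exact eLpNormEssSup_le_of_ae_bound (C := |γ| / (4 * Real.sqrt n))
        (ae_of_all _ fun x => by rw [Real.norm_eq_abs]; exact bound_sup γ n hn x)
  case part3 =>
    apply L2_tendsto _ (3 * |γ| / 2)
    · intro n; exact measurable_deriv _
    · filter_upwards [eventually_ge_atTop 1] with n hn
      filter_upwards [ae_ne_zero] with x hx
      exact deriv_zeta_le γ n hn hx
    · filter_upwards [ae_ne_zero] with x hx
      apply squeeze_zero_norm' (a := fun n : ℕ => 3 * |γ| / 2 * Real.exp (-((n : ℝ) * x ^ 2) / 2))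
      · exact Eventually.of_forall fun n => by
          rw [Real.norm_eq_abs]; exact deriv_zeta_le' γ n hx
      · have := (exp_seq_tendsto_zero hx).const_mul (3 * |γ| / 2)
        simpa using this
  case part4 =>
    apply L2_tendsto _ (|γ| / 2 * (2 + |γ| / 2))
    · intro n
      exact (continuous_const.sub ((continuous_zeta γ n).pow 2)).measurable
    · filter_upwards [eventually_ge_atTop 1] with n hn
      exact ae_of_all _ fun x => one_sub_sq_le γ n hn x
    · filter_upwards [ae_ne_zero] with x hx
      apply squeeze_zero_norm'
        (a := fun n : ℕ => |γ| / 2 * (2 + |γ| / 2) * Real.exp (-((n : ℝ) * x ^ 2) / 2))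
      · filter_upwards [eventually_ge_atTop 1] with n hn
        rw [Real.norm_eq_abs]; exact one_sub_sq_le' γ n hn x
      · have := (exp_seq_tendsto_zero hx).const_mul (|γ| / 2 * (2 + |γ| / 2))
        simpa using this
end

section
/- Let γ ≠ 0 and c_γ = (1/√2) sinh⁻¹(-2√2/γ). Then the function b_γ(x) = tanh((|x| - c_γ)/√2) satisfies the jump condition b_γ'(0⁺) - b_γ'(0⁻) = γ b_γ(0). -/
open Filter Topology

lemma hasDerivAt_tanh' (x : ℝ) :
    HasDerivAt Real.tanh (1 / Real.cosh x ^ 2) x := by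
  have h : HasDerivAt (fun x => Real.sinh x / Real.cosh x)
      ((Real.cosh x * Real.cosh x - Real.sinh x * Real.sinh x) / Real.cosh x ^ 2) x :=
    (Real.hasDerivAt_sinh x).div (Real.hasDerivAt_cosh x) (ne_of_gt (Real.cosh_pos x))
  have h1 : (Real.cosh x * Real.cosh x - Real.sinh x * Real.sinh x) = 1 := by
    nlinarith [Real.cosh_sq_sub_sinh_sq x]
  rw [h1] at h
  exact h.congr_of_eventuallyEq (by filter_upwards with y using (Real.tanh_eq_sinh_div_cosh y))

lemma hasDerivAt_g (c x : ℝ) :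
    HasDerivAt (fun x => Real.tanh ((x - c) / Real.sqrt 2))
      (1 / Real.cosh ((x - c) / Real.sqrt 2) ^ 2 * (Real.sqrt 2)⁻¹) x := by
  have hinner : HasDerivAt (fun x : ℝ => (x - c) / Real.sqrt 2) ((Real.sqrt 2)⁻¹) x := by
    simpa using ((hasDerivAt_id x).sub_const c).div_const (Real.sqrt 2)
  exact (hasDerivAt_tanh' _).comp x hinner

lemma hasDerivAt_g_neg (c x : ℝ) :
    HasDerivAt (fun x => Real.tanh ((-x - c) / Real.sqrt 2))
      (1 / Real.cosh ((-x - c) / Real.sqrt 2) ^ 2 * (-(Real.sqrt 2)⁻¹)) x := by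
  have hinner : HasDerivAt (fun x : ℝ => (-x - c) / Real.sqrt 2) (-(Real.sqrt 2)⁻¹) x := by
    have h := (((hasDerivAt_id x).neg).sub_const c).div_const (Real.sqrt 2)
    simpa [neg_div, one_div] using h
  exact (hasDerivAt_tanh' _).comp x hinner

/-- For `γ ≠ 0` and `c_γ = (1/√2) arsinh(-2√2/γ)`, the soliton
`b_γ(x) = tanh((|x| - c_γ)/√2)` satisfies the jump condition
`b_γ'(0⁺) - b_γ'(0⁻) = γ b_γ(0)`. -/
theorem b_gamma_jump (γ : ℝ) (hγ : γ ≠ 0) :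
    let cγ : ℝ := (1 / Real.sqrt 2) * Real.arsinh (-(2 * Real.sqrt 2) / γ)
    let b : ℝ → ℝ := fun x => Real.tanh ((|x| - cγ) / Real.sqrt 2)
    ∃ dp dm : ℝ,
      Tendsto (deriv b) (𝓝[>] (0:ℝ)) (𝓝 dp) ∧
      Tendsto (deriv b) (𝓝[<] (0:ℝ)) (𝓝 dm) ∧
      dp - dm = γ * b 0 := by
  intro cγ b
  have hs2 : (0:ℝ) < Real.sqrt 2 := Real.sqrt_pos.mpr (by norm_num)
  have hs2' : Real.sqrt 2 * Real.sqrt 2 = 2 := Real.mul_self_sqrt (by norm_num)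
  set u : ℝ := Real.arsinh (-(2 * Real.sqrt 2) / γ) with hu
  have hcu : cγ / Real.sqrt 2 = u / 2 := by
    show (1 / Real.sqrt 2) * u / Real.sqrt 2 = u / 2
    field_simp
    rw [Real.sq_sqrt (by norm_num : (0:ℝ) ≤ 2)]
    ring
  -- derivative formulas off 0
  have hb_pos : ∀ x ∈ Set.Ioi (0:ℝ),
      deriv b x = 1 / Real.cosh ((x - cγ) / Real.sqrt 2) ^ 2 * (Real.sqrt 2)⁻¹ := by
    intro x hx
    have heq : b =ᶠ[𝓝 x] fun y => Real.tanh ((y - cγ) / Real.sqrt 2) := by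
      filter_upwards [Ioi_mem_nhds hx] with y hy
      simp only [b, abs_of_pos (Set.mem_Ioi.mp hy)]
    rw [Filter.EventuallyEq.deriv_eq heq, (hasDerivAt_g cγ x).deriv]
  have hb_neg : ∀ x ∈ Set.Iio (0:ℝ),
      deriv b x = 1 / Real.cosh ((-x - cγ) / Real.sqrt 2) ^ 2 * (-(Real.sqrt 2)⁻¹) := by
    intro x hx
    have heq : b =ᶠ[𝓝 x] fun y => Real.tanh ((-y - cγ) / Real.sqrt 2) := by
      filter_upwards [Iio_mem_nhds hx] with y hy
      simp only [b, abs_of_neg (Set.mem_Iio.mp hy)]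
    rw [Filter.EventuallyEq.deriv_eq heq, (hasDerivAt_g_neg cγ x).deriv]
  have hcoshne : ∀ y : ℝ, Real.cosh y ^ 2 ≠ 0 := fun y => pow_ne_zero _ (ne_of_gt (Real.cosh_pos y))
  refine ⟨1 / Real.cosh (u / 2) ^ 2 * (Real.sqrt 2)⁻¹,
    -(1 / Real.cosh (u / 2) ^ 2 * (Real.sqrt 2)⁻¹), ?_, ?_, ?_⟩
  · -- right limit
    have hcont : Tendsto (fun x : ℝ => 1 / Real.cosh ((x - cγ) / Real.sqrt 2) ^ 2 * (Real.sqrt 2)⁻¹)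
        (𝓝 (0:ℝ)) (𝓝 (1 / Real.cosh ((0 - cγ) / Real.sqrt 2) ^ 2 * (Real.sqrt 2)⁻¹)) := by
      apply Continuous.tendsto
      have : Continuous fun x : ℝ => Real.cosh ((x - cγ) / Real.sqrt 2) ^ 2 :=
        (Real.continuous_cosh.comp ((continuous_id.sub continuous_const).div_const _)).pow 2
      exact ((continuous_const.div this (fun x => hcoshne _)).mul continuous_const)
    have h0 : (1 : ℝ) / Real.cosh ((0 - cγ) / Real.sqrt 2) ^ 2 * (Real.sqrt 2)⁻¹
        = 1 / Real.cosh (u / 2) ^ 2 * (Real.sqrt 2)⁻¹ := by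
      rw [zero_sub, neg_div, hcu, Real.cosh_neg]
    rw [h0] at hcont
    refine Tendsto.congr' ?_ (hcont.mono_left nhdsWithin_le_nhds)
    filter_upwards [self_mem_nhdsWithin] with x hx using (hb_pos x hx).symm
  · -- left limit
    have hcont : Tendsto (fun x : ℝ => 1 / Real.cosh ((-x - cγ) / Real.sqrt 2) ^ 2 * (-(Real.sqrt 2)⁻¹))
        (𝓝 (0:ℝ)) (𝓝 (1 / Real.cosh ((-(0:ℝ) - cγ) / Real.sqrt 2) ^ 2 * (-(Real.sqrt 2)⁻¹))) := by
      apply Continuous.tendsto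
      have : Continuous fun x : ℝ => Real.cosh ((-x - cγ) / Real.sqrt 2) ^ 2 :=
        (Real.continuous_cosh.comp ((continuous_id.neg.sub continuous_const).div_const _)).pow 2
      exact ((continuous_const.div this (fun x => hcoshne _)).mul continuous_const)
    have h0 : (1 : ℝ) / Real.cosh ((-(0:ℝ) - cγ) / Real.sqrt 2) ^ 2 * (-(Real.sqrt 2)⁻¹)
        = -(1 / Real.cosh (u / 2) ^ 2 * (Real.sqrt 2)⁻¹) := by
      rw [neg_zero, zero_sub, neg_div, hcu, Real.cosh_neg]
      ring
    rw [h0] at hcont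
    refine Tendsto.congr' ?_ (hcont.mono_left nhdsWithin_le_nhds)
    filter_upwards [self_mem_nhdsWithin] with x hx using (hb_neg x hx).symm
  · -- jump identity
    have hb0 : b 0 = Real.tanh (-(u / 2)) := by
      simp only [b, abs_zero, zero_sub, neg_div, hcu]
    rw [hb0, Real.tanh_eq_sinh_div_cosh, Real.sinh_neg, Real.cosh_neg]
    have hsinh : Real.sinh u = -(2 * Real.sqrt 2) / γ := Real.sinh_arsinh _
    have h2 : Real.sinh u = 2 * Real.sinh (u / 2) * Real.cosh (u / 2) := by
      conv_lhs => rw [show u = 2 * (u / 2) by ring]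
      exact Real.sinh_two_mul _
    rw [h2] at hsinh
    have hchne : Real.cosh (u / 2) ≠ 0 := ne_of_gt (Real.cosh_pos _)
    field_simp
    field_simp at hsinh
    linear_combination Real.sqrt 2 * hsinh - hs2'
end

section
/- Let γ < 0 and c_γ = (1/√2) sinh⁻¹(-2√2/γ) > 0. Then the function b̃_γ(x) = coth((|x| + c_γ)/√2) satisfies the jump condition b̃_γ'(0⁺) - b̃_γ'(0⁻) = γ b̃_γ(0). -/
open Filter Topology

/-- The hyperbolic cotangent. -/
noncomputable def Real.coth (x : ℝ) : ℝ := Real.cosh x / Real.sinh x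

lemma coth_aux_hasDerivAt (a c x : ℝ)
    (h : Real.sinh ((a * x + c) / Real.sqrt 2) ≠ 0) :
    HasDerivAt (fun y => Real.coth ((a * y + c) / Real.sqrt 2))
      (-(a / Real.sqrt 2) / Real.sinh ((a * x + c) / Real.sqrt 2) ^ 2) x := by
  set u := (a * x + c) / Real.sqrt 2 with hu
  have hinner : HasDerivAt (fun y : ℝ => (a * y + c) / Real.sqrt 2) (a / Real.sqrt 2) x := by
    have h1 : HasDerivAt (fun y : ℝ => a * y + c) a x := by
      simpa using ((hasDerivAt_id x).const_mul a).add_const c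
    simpa using h1.div_const (Real.sqrt 2)
  have hcosh : HasDerivAt (fun y : ℝ => Real.cosh ((a * y + c) / Real.sqrt 2))
      (Real.sinh u * (a / Real.sqrt 2)) x := by
    have := (Real.hasDerivAt_cosh u).comp x hinner; exact this
  have hsinh : HasDerivAt (fun y : ℝ => Real.sinh ((a * y + c) / Real.sqrt 2))
      (Real.cosh u * (a / Real.sqrt 2)) x := by
    have := (Real.hasDerivAt_sinh u).comp x hinner; exact this
  have hd := hcosh.div hsinh h
  have key : Real.cosh u ^ 2 - Real.sinh u ^ 2 = 1 := Real.cosh_sq_sub_sinh_sq u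
  have : (Real.sinh u * (a / Real.sqrt 2) * Real.sinh u -
      Real.cosh u * (Real.cosh u * (a / Real.sqrt 2))) / Real.sinh u ^ 2
      = -(a / Real.sqrt 2) / Real.sinh u ^ 2 := by
    congr 1
    linear_combination (-(a / Real.sqrt 2)) * key
  rw [this] at hd
  exact hd

/-- For `γ < 0` and `c_γ = (1/√2) arsinh(-2√2/γ) > 0`, the soliton
`b̃_γ(x) = coth((|x| + c_γ)/√2)` satisfies the jump condition
`b̃_γ'(0⁺) - b̃_γ'(0⁻) = γ b̃_γ(0)`. -/
theorem b_tilde_gamma_jump (γ : ℝ) (hγ : γ < 0) :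
    let cγ : ℝ := (1 / Real.sqrt 2) * Real.arsinh (-(2 * Real.sqrt 2) / γ)
    let b : ℝ → ℝ := fun x => Real.coth ((|x| + cγ) / Real.sqrt 2)
    0 < cγ ∧
    ∃ dp dm : ℝ,
      Tendsto (deriv b) (𝓝[>] (0:ℝ)) (𝓝 dp) ∧
      Tendsto (deriv b) (𝓝[<] (0:ℝ)) (𝓝 dm) ∧
      dp - dm = γ * b 0 := by
  intro cγ b
  have h2 : (0:ℝ) < Real.sqrt 2 := Real.sqrt_pos.mpr (by norm_num)
  have hs2 : Real.sqrt 2 * Real.sqrt 2 = 2 := Real.mul_self_sqrt (by norm_num)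
  have hA : 0 < -(2 * Real.sqrt 2) / γ := by
    rw [div_pos_iff]
    right
    constructor
    · nlinarith
    · exact hγ
  have har : 0 < Real.arsinh (-(2 * Real.sqrt 2) / γ) := Real.arsinh_pos_iff.mpr hA
  have hc : 0 < cγ := mul_pos (by positivity) har
  set t : ℝ := cγ / Real.sqrt 2 with htdef
  have ht : 0 < t := div_pos hc h2
  have hst : Real.sinh t ≠ 0 := ne_of_gt (Real.sinh_pos_iff.mpr ht)
  -- key: 2*t = arsinh A
  have h2t : 2 * t = Real.arsinh (-(2 * Real.sqrt 2) / γ) := by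
    rw [htdef]
    show 2 * ((1 / Real.sqrt 2) * Real.arsinh (-(2 * Real.sqrt 2) / γ) / Real.sqrt 2) = _
    field_simp
    rw [Real.sq_sqrt (by norm_num : (0:ℝ) ≤ 2)]
  have hsinh2t : 2 * Real.sinh t * Real.cosh t = -(2 * Real.sqrt 2) / γ := by
    rw [← Real.sinh_two_mul, h2t, Real.sinh_arsinh]
  -- positive side
  have hderiv_pos : ∀ x : ℝ, 0 < x →
      deriv b x = -(1 / Real.sqrt 2) / Real.sinh ((x + cγ) / Real.sqrt 2) ^ 2 := by
    intro x hx
    have hsx : Real.sinh ((1 * x + cγ) / Real.sqrt 2) ≠ 0 := by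
      apply ne_of_gt
      apply Real.sinh_pos_iff.mpr
      positivity
    have hd := coth_aux_hasDerivAt 1 cγ x hsx
    have heq : b =ᶠ[𝓝 x] fun y => Real.coth ((1 * y + cγ) / Real.sqrt 2) := by
      filter_upwards [isOpen_Ioi.mem_nhds hx] with y hy
      simp [b, abs_of_pos (Set.mem_Ioi.mp hy)]
    have := (hd.congr_of_eventuallyEq heq).deriv
    rw [this]
    norm_num
  have hderiv_neg : ∀ x : ℝ, x < 0 →
      deriv b x = (1 / Real.sqrt 2) / Real.sinh ((-x + cγ) / Real.sqrt 2) ^ 2 := by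
    intro x hx
    have hsx : Real.sinh ((-1 * x + cγ) / Real.sqrt 2) ≠ 0 := by
      apply ne_of_gt
      apply Real.sinh_pos_iff.mpr
      have : 0 < -1 * x := by linarith
      positivity
    have hd := coth_aux_hasDerivAt (-1) cγ x hsx
    have heq : b =ᶠ[𝓝 x] fun y => Real.coth ((-1 * y + cγ) / Real.sqrt 2) := by
      filter_upwards [isOpen_Iio.mem_nhds hx] with y hy
      have : |y| = -1 * y := by
        rw [abs_of_neg (Set.mem_Iio.mp hy)]; ring
      simp [b, this]
    have := (hd.congr_of_eventuallyEq heq).deriv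
    rw [this]
    ring_nf
  refine ⟨hc, -(1 / Real.sqrt 2) / Real.sinh t ^ 2, (1 / Real.sqrt 2) / Real.sinh t ^ 2, ?_, ?_, ?_⟩
  · -- right limit
    have hcont : ContinuousAt (fun x : ℝ => -(1 / Real.sqrt 2) / Real.sinh ((x + cγ) / Real.sqrt 2) ^ 2) 0 := by
      apply ContinuousAt.div
      · exact continuousAt_const
      · exact ((Real.continuous_sinh.comp ((continuous_id.add continuous_const).div_const _)).pow 2).continuousAt
      · simp only [zero_add]
        exact pow_ne_zero 2 hst
    have htend : Tendsto (fun x : ℝ => -(1 / Real.sqrt 2) / Real.sinh ((x + cγ) / Real.sqrt 2) ^ 2)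
        (𝓝[>] (0:ℝ)) (𝓝 (-(1 / Real.sqrt 2) / Real.sinh t ^ 2)) := by
      have := hcont.tendsto.mono_left (nhdsWithin_le_nhds (s := Set.Ioi (0:ℝ)))
      simpa [htdef] using this
    refine Tendsto.congr' ?_ htend
    filter_upwards [eventually_mem_nhdsWithin] with x hx
    exact (hderiv_pos x (Set.mem_Ioi.mp hx)).symm
  · -- left limit
    have hcont : ContinuousAt (fun x : ℝ => (1 / Real.sqrt 2) / Real.sinh ((-x + cγ) / Real.sqrt 2) ^ 2) 0 := by
      apply ContinuousAt.div
      · exact continuousAt_const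
      · exact ((Real.continuous_sinh.comp ((continuous_id.neg.add continuous_const).div_const _)).pow 2).continuousAt
      · simp only [neg_zero, zero_add]
        exact pow_ne_zero 2 hst
    have htend : Tendsto (fun x : ℝ => (1 / Real.sqrt 2) / Real.sinh ((-x + cγ) / Real.sqrt 2) ^ 2)
        (𝓝[<] (0:ℝ)) (𝓝 ((1 / Real.sqrt 2) / Real.sinh t ^ 2)) := by
      have := hcont.tendsto.mono_left (nhdsWithin_le_nhds (s := Set.Iio (0:ℝ)))
      simpa [htdef] using this
    refine Tendsto.congr' ?_ htend
    filter_upwards [eventually_mem_nhdsWithin] with x hx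
    exact (hderiv_neg x (Set.mem_Iio.mp hx)).symm
  · -- jump identity
    have hb0 : b 0 = Real.cosh t / Real.sinh t := by
      simp [b, Real.coth, htdef]
    rw [hb0]
    have hγ' : γ ≠ 0 := ne_of_lt hγ
    have hkey : γ * (Real.sinh t * Real.cosh t) = -Real.sqrt 2 := by
      have := hsinh2t
      field_simp at this ⊢
      linear_combination this
    field_simp
    linear_combination (-Real.sqrt 2) * hkey + hs2
end

section
/- Let γ ≠ 0 and κ(x) = tanh(x/√2). Suppose v : ℝ → ℝ is in L²(ℝ), continuous, twice differentiable away from 0, satisfies -v'' + 2v - 3(1-κ²)v = 0 on ℝ \ {0}, and the jump condition v'(0⁺) - v'(0⁻) = γ v(0). Then v ≡ 0. -/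
open MeasureTheory Filter Topology

noncomputable def wfun (x : ℝ) : ℝ := 1 - Real.tanh (x / Real.sqrt 2) ^ 2

noncomputable def wfun' (x : ℝ) : ℝ :=
  -(2 / Real.sqrt 2) * Real.tanh (x / Real.sqrt 2) * wfun x

lemma sqrt2_pos : 0 < Real.sqrt 2 := Real.sqrt_pos.mpr (by norm_num)

lemma sqrt2_sq : Real.sqrt 2 ^ 2 = 2 := Real.sq_sqrt (by norm_num)

lemma wfun_eq (x : ℝ) : wfun x = 1 / Real.cosh (x / Real.sqrt 2) ^ 2 := by
  have hc := (Real.cosh_pos (x / Real.sqrt 2)).ne'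
  have h := Real.cosh_sq_sub_sinh_sq (x / Real.sqrt 2)
  rw [wfun, Real.tanh_eq_sinh_div_cosh]
  field_simp
  linarith

lemma wfun_pos (x : ℝ) : 0 < wfun x := by
  rw [wfun_eq]; positivity

lemma wfun_le_one (x : ℝ) : wfun x ≤ 1 := by
  have := sq_nonneg (Real.tanh (x / Real.sqrt 2)); rw [wfun]; linarith

lemma wfun_zero : wfun 0 = 1 := by simp [wfun, Real.tanh_zero]

lemma wfun'_zero : wfun' 0 = 0 := by simp [wfun', Real.tanh_zero]

lemma hasDerivAt_tanh (y : ℝ) : HasDerivAt Real.tanh (1 - Real.tanh y ^ 2) y := by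
  have h := (Real.hasDerivAt_sinh y).div (Real.hasDerivAt_cosh y) (Real.cosh_pos y).ne'
  simp only [Pi.div_def, ← Real.tanh_eq_sinh_div_cosh] at h
  refine h.congr_deriv (Eq.symm ?_)
  have hc := (Real.cosh_pos y).ne'
  have hs := Real.cosh_sq_sub_sinh_sq y
  rw [Real.tanh_eq_sinh_div_cosh]
  field_simp

lemma hasDerivAt_tanh_comp (x : ℝ) :
    HasDerivAt (fun x : ℝ => Real.tanh (x / Real.sqrt 2))
      (wfun x * (1 / Real.sqrt 2)) x := by
  have h1 : HasDerivAt (fun x : ℝ => x / Real.sqrt 2) (1 / Real.sqrt 2) x := by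
    simpa using (hasDerivAt_id x).div_const (Real.sqrt 2)
  have h2 := (hasDerivAt_tanh (x / Real.sqrt 2)).comp x h1
  simpa [wfun, Function.comp_def] using h2

lemma hasDerivAt_wfun (x : ℝ) : HasDerivAt wfun (wfun' x) x := by
  have h := ((hasDerivAt_tanh_comp x).pow 2).const_sub 1
  refine h.congr_deriv (Eq.symm ?_)
  rw [wfun', wfun]
  ring

lemma hasDerivAt_wfun' (x : ℝ) : HasDerivAt wfun' (2 * wfun x - 3 * wfun x ^ 2) x := by
  have h := (((hasDerivAt_tanh_comp x).const_mul (-(2 / Real.sqrt 2))).mul (hasDerivAt_wfun x))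
  refine h.congr_deriv (Eq.symm ?_)
  have h2 : Real.sqrt 2 ^ 2 = 2 := sqrt2_sq
  have h0 : Real.sqrt 2 ≠ 0 := sqrt2_pos.ne'
  have ht : Real.tanh (x / Real.sqrt 2) ^ 2 = 1 - wfun x := by rw [wfun]; ring
  rw [wfun']
  field_simp
  linear_combination (2 * wfun x - 3 * wfun x ^ 2) * h2
    + (-4 * wfun x) * ht

lemma wfun_cont : Continuous wfun :=
  continuous_iff_continuousAt.mpr fun x => (hasDerivAt_wfun x).continuousAt

lemma wfun'_cont : Continuous wfun' :=
  continuous_iff_continuousAt.mpr fun x => (hasDerivAt_wfun' x).continuousAt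

lemma wfun_mul_exp_le (x : ℝ) : wfun x * Real.exp (x / Real.sqrt 2) ^ 2 ≤ 4 := by
  set t := x / Real.sqrt 2
  have hA : 0 < Real.exp t := Real.exp_pos t
  have hc : Real.cosh t = (Real.exp t + (Real.exp t)⁻¹) / 2 := by
    rw [Real.cosh_eq, Real.exp_neg]
  have hcp : 0 < Real.cosh t := Real.cosh_pos t
  have hinv : Real.exp t * (Real.exp t)⁻¹ = 1 := mul_inv_cancel₀ hA.ne'
  rw [wfun_eq, div_mul_eq_mul_div, div_le_iff₀ (by positivity)]
  rw [hc]
  nlinarith [sq_nonneg ((Real.exp t)⁻¹), inv_pos.mpr hA]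

lemma one_le_wfun_mul_exp (x : ℝ) (hx : 0 ≤ x) :
    1 ≤ wfun x * Real.exp (x / Real.sqrt 2) ^ 2 := by
  set t := x / Real.sqrt 2 with ht
  have hA1 : 1 ≤ Real.exp t := Real.one_le_exp (by positivity)
  have hA : 0 < Real.exp t := Real.exp_pos t
  have hc : Real.cosh t = (Real.exp t + (Real.exp t)⁻¹) / 2 := by
    rw [Real.cosh_eq, Real.exp_neg]
  have hcp : 0 < Real.cosh t := Real.cosh_pos t
  have hiv : (Real.exp t)⁻¹ ≤ 1 := inv_le_one_of_one_le₀ hA1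
  have hcA : Real.cosh t ≤ Real.exp t := by rw [hc]; linarith
  rw [wfun_eq, div_mul_eq_mul_div, le_div_iff₀ (by positivity), one_mul]
  nlinarith

set_option maxHeartbeats 2000000 in
lemma halfline (v : ℝ → ℝ) (hv2 : MemLp v 2 (volume : Measure ℝ))
    (hcont : Continuous v)
    (hdiff : ∀ x : ℝ, 0 < x → DifferentiableAt ℝ v x ∧ DifferentiableAt ℝ (deriv v) x)
    (hode : ∀ x : ℝ, 0 < x →
      -(deriv (deriv v) x) + 2 * v x
        - 3 * (1 - Real.tanh (x / Real.sqrt 2) ^ 2) * v x = 0)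
    (dp : ℝ) (hdp : Tendsto (deriv v) (𝓝[>] (0:ℝ)) (𝓝 dp)) :
    dp = 0 ∧ ∀ x : ℝ, 0 ≤ x → v x = v 0 * wfun x := by
  classical
  set Wr : ℝ → ℝ := fun x => deriv v x * wfun x - v x * wfun' x with hWrdef
  -- the Wronskian has zero derivative on (0, ∞)
  have hWr0 : ∀ x : ℝ, 0 < x → HasDerivAt Wr 0 x := by
    intro x hx
    have hv := (hdiff x hx).1.hasDerivAt
    have hv' := (hdiff x hx).2.hasDerivAt
    have hodev : deriv (deriv v) x = 2 * v x - 3 * wfun x * v x := by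
      have := hode x hx
      rw [wfun]; linarith
    have H := (hv'.mul (hasDerivAt_wfun x)).sub (hv.mul (hasDerivAt_wfun' x))
    refine H.congr_deriv (Eq.symm ?_)
    rw [hodev]; ring
  -- hence constant on (0, ∞)
  have hWrconst : ∀ x y : ℝ, 0 < x → x ≤ y → Wr y = Wr x := by
    intro x y hx hxy
    have hco : ContinuousOn Wr (Set.Icc x y) := by
      intro z hz
      exact ((hWr0 z (lt_of_lt_of_le hx hz.1)).continuousAt).continuousWithinAt
    have hdz : ∀ z ∈ Set.Ico x y, HasDerivWithinAt Wr 0 (Set.Ici z) z := by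
      intro z hz
      exact (hWr0 z (lt_of_lt_of_le hx hz.1)).hasDerivWithinAt
    exact constant_of_has_deriv_right_zero hco hdz y (Set.right_mem_Icc.mpr hxy)
  -- the Wronskian tends to dp at 0⁺
  have hWrlim : Tendsto Wr (𝓝[>] (0:ℝ)) (𝓝 dp) := by
    have h1 : Tendsto (fun x => deriv v x * wfun x) (𝓝[>] (0:ℝ)) (𝓝 (dp * 1)) := by
      refine hdp.mul ?_
      have := (wfun_cont.tendsto 0).mono_left (nhdsWithin_le_nhds (s := Set.Ioi (0:ℝ)))
      rwa [wfun_zero] at this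
    have h2 : Tendsto (fun x => v x * wfun' x) (𝓝[>] (0:ℝ)) (𝓝 (v 0 * 0)) := by
      refine Tendsto.mul ?_ ?_
      · exact (hcont.tendsto 0).mono_left nhdsWithin_le_nhds
      · have := (wfun'_cont.tendsto 0).mono_left (nhdsWithin_le_nhds (s := Set.Ioi (0:ℝ)))
        rwa [wfun'_zero] at this
    have := h1.sub h2
    simpa using this
  -- hence the Wronskian equals dp on (0, ∞)
  have hWreq : ∀ x : ℝ, 0 < x → Wr x = dp := by
    intro x hx
    have hev : Wr =ᶠ[𝓝[>] (0:ℝ)] fun _ => Wr x := by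
      filter_upwards [Ioo_mem_nhdsGT_of_mem (Set.mem_Ico.mpr ⟨le_refl 0, hx⟩)] with y hy
      exact (hWrconst y x hy.1 hy.2.le).symm
    have : Tendsto Wr (𝓝[>] (0:ℝ)) (𝓝 (Wr x)) :=
      Tendsto.congr' hev.symm tendsto_const_nhds
    exact tendsto_nhds_unique this hWrlim
  -- the ratio u = v / w
  set u : ℝ → ℝ := fun x => v x / wfun x with hudef
  have hucont : Continuous u := hcont.div wfun_cont fun x => (wfun_pos x).ne'
  have hu0 : u 0 = v 0 := by simp [hudef, wfun_zero]
  have hu' : ∀ x : ℝ, 0 < x → HasDerivAt u (dp / wfun x ^ 2) x := by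
    intro x hx
    have h := ((hdiff x hx).1.hasDerivAt.div (hasDerivAt_wfun x) (wfun_pos x).ne')
    have hWx : deriv v x * wfun x - v x * wfun' x = dp := hWreq x hx
    rwa [hWx] at h
  have hvw : ∀ x : ℝ, v x = u x * wfun x := by
    intro x
    rw [hudef]
    rw [div_mul_cancel₀ _ (wfun_pos x).ne']
  -- dp must vanish, else v grows exponentially, contradicting L²
  have hdp0 : dp = 0 := by
    by_contra hne
    set σ : ℝ := if 0 ≤ dp then 1 else -1 with hσdef
    have hσdp : σ * dp = |dp| := by
      by_cases h : 0 ≤ dp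
      · simp [hσdef, h, abs_of_nonneg h]
      · simp [hσdef, h, abs_of_neg (lt_of_not_ge h)]
    have habs : 0 < |dp| := abs_pos.mpr hne
    set C : ℝ := |dp| / 16 * (Real.sqrt 2 / 4) with hCdef
    have hC : 0 < C := by positivity
    set g : ℝ → ℝ := fun x => σ * v 0 + C * (Real.exp (4 * (x / Real.sqrt 2)) - 1) with hgdef
    have hg' : ∀ x : ℝ,
        HasDerivAt g (|dp| / 16 * Real.exp (4 * (x / Real.sqrt 2))) x := by
      intro x
      have hl : HasDerivAt (fun x : ℝ => 4 * (x / Real.sqrt 2)) (4 / Real.sqrt 2) x := by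
        simpa [mul_div_assoc, div_eq_mul_inv] using ((hasDerivAt_id x).div_const (Real.sqrt 2)).const_mul 4
      have he := (Real.hasDerivAt_exp (4 * (x / Real.sqrt 2))).comp x hl
      have := ((he.sub_const 1).const_mul C).const_add (σ * v 0)
      refine this.congr_deriv (Eq.symm ?_)
      rw [hCdef]
      have h0 : Real.sqrt 2 ≠ 0 := sqrt2_pos.ne'
      field_simp
    set h : ℝ → ℝ := fun x => σ * u x - g x with hhdef
    have hh' : ∀ x : ℝ, 0 < x → HasDerivAt h
        (σ * (dp / wfun x ^ 2) - |dp| / 16 * Real.exp (4 * (x / Real.sqrt 2))) x := by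
      intro x hx
      exact ((hu' x hx).const_mul σ).sub (hg' x)
    have hh'nonneg : ∀ x : ℝ, 0 < x →
        0 ≤ σ * (dp / wfun x ^ 2) - |dp| / 16 * Real.exp (4 * (x / Real.sqrt 2)) := by
      intro x hx
      have hw := wfun_pos x
      have hb := wfun_mul_exp_le x
      have hA : 0 < Real.exp (x / Real.sqrt 2) := Real.exp_pos _
      have hexp4 : Real.exp (4 * (x / Real.sqrt 2)) = Real.exp (x / Real.sqrt 2) ^ 4 := by
        rw [← Real.exp_nat_mul]; norm_num
      have hσd : σ * (dp / wfun x ^ 2) = |dp| / wfun x ^ 2 := by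
        rw [mul_div_assoc'] at *
        rw [hσdp]
      rw [hσd, hexp4, sub_nonneg, div_mul_eq_mul_div, div_le_div_iff₀ (by norm_num) (by positivity)]
      have key : wfun x ^ 2 * Real.exp (x / Real.sqrt 2) ^ 4 ≤ 16 := by
        nlinarith [mul_nonneg (sub_nonneg.mpr hb) (mul_pos hw (pow_pos hA 2)).le,
          mul_pos hw (pow_pos hA 2)]
      nlinarith [mul_le_mul_of_nonneg_left key (abs_nonneg dp)]
    -- h is monotone on [0, ∞), h 0 = 0
    have hmono : MonotoneOn h (Set.Ici (0:ℝ)) := by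
      apply monotoneOn_of_deriv_nonneg (convex_Ici 0)
      · have hgc : Continuous g := by
          have h4 : Continuous fun x : ℝ => 4 * (x / Real.sqrt 2) := by fun_prop
          exact continuous_const.add
            (continuous_const.mul ((Real.continuous_exp.comp h4).sub continuous_const))
        exact ((continuous_const.mul hucont).sub hgc).continuousOn
      · intro x hx
        rw [interior_Ici] at hx
        exact ((hh' x hx).differentiableAt).differentiableWithinAt
      · intro x hx
        rw [interior_Ici] at hx
        rw [(hh' x hx).deriv]
        exact hh'nonneg x hx
    have hh0 : h 0 = 0 := by
      simp [hhdef, hgdef, hu0]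
    have hUbound : ∀ x : ℝ, 0 ≤ x → g x ≤ σ * u x := by
      intro x hx
      have := hmono (Set.self_mem_Ici) (Set.mem_Ici.mpr hx) hx
      rw [hh0] at this
      simpa [hhdef, sub_nonneg] using this
    -- pointwise exponential lower bound for σ * v
    set B : ℝ := |σ * v 0 - C| with hBdef
    have hlow : ∀ x : ℝ, 0 ≤ x →
        C * Real.exp (x / Real.sqrt 2) ^ 2 - B ≤ σ * v x := by
      intro x hx
      have hw := wfun_pos x
      have hw1 := wfun_le_one x
      have h1 : g x * wfun x ≤ σ * u x * wfun x :=
        mul_le_mul_of_nonneg_right (hUbound x hx) hw.le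
      have h2 : σ * v x = σ * u x * wfun x := by rw [hvw x]; ring
      have hexp4 : Real.exp (4 * (x / Real.sqrt 2)) = Real.exp (x / Real.sqrt 2) ^ 4 := by
        rw [← Real.exp_nat_mul]; norm_num
      have hlb := one_le_wfun_mul_exp x hx
      have hB1 : -(B) ≤ (σ * v 0 - C) * wfun x := by
        rcases abs_le.mp (le_refl B) with ⟨hb1, hb2⟩
        rcases le_or_gt 0 (σ * v 0 - C) with hcase | hcase
        · have : 0 ≤ (σ * v 0 - C) * wfun x := mul_nonneg hcase hw.le
          have hBnn : 0 ≤ B := abs_nonneg _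
          linarith
        · have h3 : -(B) ≤ σ * v 0 - C := neg_abs_le _
          nlinarith
      have hB2 : C * Real.exp (x / Real.sqrt 2) ^ 2
          ≤ C * Real.exp (4 * (x / Real.sqrt 2)) * wfun x := by
        rw [hexp4]
        have hstep := mul_le_mul_of_nonneg_left hlb
          (by positivity : (0:ℝ) ≤ C * Real.exp (x / Real.sqrt 2) ^ 2)
        nlinarith [hstep]
      have hgx : g x * wfun x = (σ * v 0 - C) * wfun x
          + C * Real.exp (4 * (x / Real.sqrt 2)) * wfun x := by
        rw [hgdef]; ring
      rw [h2] at *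
      have := h1
      rw [hgx] at this
      nlinarith [hB1, hB2]
    -- choose M beyond which |v| ≥ 1
    set M : ℝ := max (Real.sqrt 2 / 2 * Real.log ((B + 1) / C)) 0 with hMdef
    have hBnn : 0 ≤ B := abs_nonneg _
    have hone : ∀ x : ℝ, M ≤ x → 1 ≤ v x ^ 2 := by
      intro x hx
      have hx0 : 0 ≤ x := le_trans (le_max_right _ _) hx
      have hxlog : Real.sqrt 2 / 2 * Real.log ((B + 1) / C) ≤ x :=
        le_trans (le_max_left _ _) hx
      have hargpos : 0 < (B + 1) / C := by positivity
      have hexplog : (B + 1) / C ≤ Real.exp (x / Real.sqrt 2) ^ 2 := by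
        have h2x : Real.exp (x / Real.sqrt 2) ^ 2 = Real.exp (2 * (x / Real.sqrt 2)) := by
          rw [← Real.exp_nat_mul]; norm_num
        rw [h2x]
        calc (B + 1) / C = Real.exp (Real.log ((B + 1) / C)) := (Real.exp_log hargpos).symm
          _ ≤ Real.exp (2 * (x / Real.sqrt 2)) := by
              apply Real.exp_le_exp.mpr
              have h0 : (0:ℝ) < Real.sqrt 2 := sqrt2_pos
              rw [mul_div_assoc', le_div_iff₀ h0]
              nlinarith [hxlog, sqrt2_sq]
      have h1 : 1 ≤ σ * v x := by
        have := hlow x hx0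
        have hCB : B + 1 ≤ C * Real.exp (x / Real.sqrt 2) ^ 2 := by
          rw [div_le_iff₀ hC] at hexplog
          linarith [hexplog]
        linarith
      have hσabs : σ * v x ≤ |v x| := by
        calc σ * v x ≤ |σ * v x| := le_abs_self _
          _ = |σ| * |v x| := abs_mul _ _
          _ = |v x| := by
              have : |σ| = 1 := by
                by_cases hc : 0 ≤ dp <;> simp [hσdef, hc]
              rw [this, one_mul]
      have : 1 ≤ |v x| := le_trans h1 hσabs
      calc (1:ℝ) = 1 * 1 := by ring
        _ ≤ |v x| * |v x| := mul_le_mul this this (by norm_num) (abs_nonneg _)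
        _ = v x ^ 2 := by rw [← sq_abs]; ring
    -- contradiction with integrability of v²
    have hint : Integrable (fun x => v x ^ 2) volume := hv2.integrable_sq
    have hfin := hint.measure_ge_lt_top (ε := 1) one_pos
    have hsub : Set.Ici M ⊆ {a : ℝ | 1 ≤ v a ^ 2} := fun x hx => hone x hx
    have := measure_mono (μ := (volume : Measure ℝ)) hsub
    rw [Real.volume_Ici] at this
    exact absurd (lt_of_le_of_lt this hfin) (by simp)
  refine ⟨hdp0, ?_⟩
  -- with dp = 0, u is constant on [0, ∞)
  have hu'0 : ∀ x : ℝ, 0 < x → HasDerivAt u 0 x := by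
    intro x hx
    have := hu' x hx
    rwa [hdp0, zero_div] at this
  have hmono : MonotoneOn u (Set.Ici (0:ℝ)) := by
    apply monotoneOn_of_deriv_nonneg (convex_Ici 0) hucont.continuousOn
    · intro x hx
      rw [interior_Ici] at hx
      exact (hu'0 x hx).differentiableAt.differentiableWithinAt
    · intro x hx
      rw [interior_Ici] at hx
      rw [(hu'0 x hx).deriv]
  have hanti : AntitoneOn u (Set.Ici (0:ℝ)) := by
    apply antitoneOn_of_deriv_nonpos (convex_Ici 0) hucont.continuousOn
    · intro x hx
      rw [interior_Ici] at hx
      exact (hu'0 x hx).differentiableAt.differentiableWithinAt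
    · intro x hx
      rw [interior_Ici] at hx
      rw [(hu'0 x hx).deriv]
  intro x hx
  have h1 := hmono Set.self_mem_Ici (Set.mem_Ici.mpr hx) hx
  have h2 := hanti Set.self_mem_Ici (Set.mem_Ici.mpr hx) hx
  have : u x = u 0 := le_antisymm h2 h1
  rw [hvw x, this, hu0]

/-- Triviality of the kernel of `L₊^γ`: a continuous `L²` function solving
`-v'' + 2v - 3(1-κ²)v = 0` away from `0` (with `κ = tanh(·/√2)`) and satisfying
the jump condition `v'(0⁺) - v'(0⁻) = γ v(0)` vanishes identically. -/
theorem kernel_Lplus_trivial (γ : ℝ) (hγ : γ ≠ 0) (v : ℝ → ℝ)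
    (hv2 : MemLp v 2 (volume : Measure ℝ))
    (hcont : Continuous v)
    (hdiff : ∀ x : ℝ, x ≠ 0 → DifferentiableAt ℝ v x ∧ DifferentiableAt ℝ (deriv v) x)
    (hode : ∀ x : ℝ, x ≠ 0 →
      -(deriv (deriv v) x) + 2 * v x
        - 3 * (1 - Real.tanh (x / Real.sqrt 2) ^ 2) * v x = 0)
    (dp dm : ℝ)
    (hdp : Tendsto (deriv v) (𝓝[>] (0:ℝ)) (𝓝 dp))
    (hdm : Tendsto (deriv v) (𝓝[<] (0:ℝ)) (𝓝 dm))
    (hjump : dp - dm = γ * v 0) :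
    ∀ x : ℝ, v x = 0 := by
  -- right half-line
  obtain ⟨hdp0, hright⟩ := halfline v hv2 hcont
    (fun x hx => hdiff x hx.ne') (fun x hx => hode x hx.ne') dp hdp
  -- reflected function
  set vr : ℝ → ℝ := fun x => v (-x) with hvrdef
  have hvr2 : MemLp vr 2 (volume : Measure ℝ) :=
    hv2.comp_measurePreserving (Measure.measurePreserving_neg volume)
  have hvrcont : Continuous vr := hcont.comp continuous_neg
  have hneg1 : ∀ x : ℝ, HasDerivAt (fun y : ℝ => -y) (-1) x := by
    intro x
    simpa [Pi.neg_def] using (hasDerivAt_id x).neg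
  have hvrD : ∀ x : ℝ, x ≠ 0 → HasDerivAt vr (-(deriv v (-x))) x := by
    intro x hx
    have h2 := ((hdiff (-x) (neg_ne_zero.mpr hx)).1.hasDerivAt).comp x (hneg1 x)
    simpa [hvrdef, Function.comp_def] using h2
  have hvrD_eq : ∀ x : ℝ, x ≠ 0 → deriv vr x = -(deriv v (-x)) := fun x hx =>
    (hvrD x hx).deriv
  have hev : ∀ x : ℝ, x ≠ 0 → deriv vr =ᶠ[𝓝 x] fun y => -(deriv v (-y)) := by
    intro x hx
    have : {y : ℝ | y ≠ 0} ∈ 𝓝 x := isOpen_compl_singleton.mem_nhds hx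
    filter_upwards [this] with y hy
    exact hvrD_eq y hy
  have hvrD2 : ∀ x : ℝ, x ≠ 0 →
      HasDerivAt (fun y : ℝ => -(deriv v (-y))) (deriv (deriv v) (-x)) x := by
    intro x hx
    have h2 := ((hdiff (-x) (neg_ne_zero.mpr hx)).2.hasDerivAt).comp x (hneg1 x)
    have := h2.neg
    simpa [Function.comp_def, Pi.neg_def] using this
  have hvrdiff : ∀ x : ℝ, x ≠ 0 →
      DifferentiableAt ℝ vr x ∧ DifferentiableAt ℝ (deriv vr) x := by
    intro x hx
    refine ⟨(hvrD x hx).differentiableAt, ?_⟩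
    have := (hvrD2 x hx).differentiableAt
    exact (Filter.EventuallyEq.differentiableAt_iff (hev x hx)).mpr this
  have hvr2nd : ∀ x : ℝ, x ≠ 0 → deriv (deriv vr) x = deriv (deriv v) (-x) := by
    intro x hx
    rw [Filter.EventuallyEq.deriv_eq (hev x hx)]
    exact (hvrD2 x hx).deriv
  have hvrode : ∀ x : ℝ, x ≠ 0 →
      -(deriv (deriv vr) x) + 2 * vr x
        - 3 * (1 - Real.tanh (x / Real.sqrt 2) ^ 2) * vr x = 0 := by
    intro x hx
    have h0 := hode (-x) (neg_ne_zero.mpr hx)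
    have htanh : Real.tanh (-x / Real.sqrt 2) ^ 2 = Real.tanh (x / Real.sqrt 2) ^ 2 := by
      rw [neg_div, Real.tanh_neg]; ring
    rw [hvr2nd x hx, hvrdef]
    rw [htanh] at h0
    simpa using h0
  -- limit of deriv vr from the right is -dm
  have hnegmap : Tendsto (fun y : ℝ => -y) (𝓝[>] (0:ℝ)) (𝓝[<] (0:ℝ)) := by
    apply tendsto_nhdsWithin_of_tendsto_nhds_of_eventually_within
    · simpa using (continuous_neg.tendsto (0:ℝ)).mono_left
        (nhdsWithin_le_nhds (s := Set.Ioi (0:ℝ)))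
    · filter_upwards [self_mem_nhdsWithin] with y hy
      simpa using hy
  have hvrdp : Tendsto (deriv vr) (𝓝[>] (0:ℝ)) (𝓝 (-dm)) := by
    have h1 : Tendsto (fun y : ℝ => -(deriv v (-y))) (𝓝[>] (0:ℝ)) (𝓝 (-dm)) :=
      (hdm.comp hnegmap).neg
    apply h1.congr'
    filter_upwards [self_mem_nhdsWithin] with y hy
    exact (hvrD_eq y (ne_of_gt hy)).symm
  obtain ⟨hdm0, hleft⟩ := halfline vr hvr2 hvrcont
    (fun x hx => hvrdiff x hx.ne') (fun x hx => hvrode x hx.ne') (-dm) hvrdp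
  have hdm0' : dm = 0 := by linarith [neg_eq_zero.mp hdm0]
  have hv0 : v 0 = 0 := by
    have : γ * v 0 = 0 := by rw [← hjump, hdp0, hdm0']; ring
    exact (mul_eq_zero.mp this).resolve_left hγ
  intro x
  rcases le_or_gt 0 x with hx | hx
  · rw [hright x hx, hv0, zero_mul]
  · have h := hleft (-x) (by linarith)
    have : vr 0 = v 0 := by simp [hvrdef]
    rw [this, hv0, zero_mul] at h
    simpa [hvrdef] using h
end
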